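/- Let S be a nonempty h-admissible set, m := m(S), n ≥ h(m), and let k satisfy h(m) − m ≤ k ≤ h(m). If π ∈ I_h(S,n) with π_{h(m)} = k, then the total number of inversions of π satisfies ℓ(π) = ℓ(π|_{h(m)}) + ℓ_{[k+1,n]}([k+1,n] \ {π_{h(m)+1}, …, π_n}). -/

import Mathlib

open Finset

/-- The 1-based `k`-th entry (as a value in `{1,…,n}`) of a permutation of `Fin n`. -/
def entry {n : ℕ} (π : Equiv.Perm (Fin n)) (k : ℕ) : ℕ :=
  if hk : k - 1 < n then ((π ⟨k - 1, hk⟩ : Fin n) : ℕ) + 1 else 0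

/-- The set of possible h-inversions `P_h = {(i,j) : 0 < i, i < j ≤ h i}`. -/
def Ph (h : ℕ → ℕ) : Set (ℕ × ℕ) := {p | 0 < p.1 ∧ p.1 < p.2 ∧ p.2 ≤ h p.1}

/-- The set of h-inversions of a permutation `π ∈ S_n`, as 1-based pairs:
`inv_h(π) = {(i,j) : i < j ≤ min(h i, n), π_i > π_j}`. -/
def invh (h : ℕ → ℕ) {n : ℕ} (π : Equiv.Perm (Fin n)) : Finset (ℕ × ℕ) :=
  ((Finset.univ : Finset (Fin n × Fin n)).filter
      (fun p => (p.1 : ℕ) < (p.2 : ℕ) ∧ (p.2 : ℕ) + 1 ≤ h ((p.1 : ℕ) + 1) ∧ π p.2 < π p.1)).image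
    (fun p => ((p.1 : ℕ) + 1, (p.2 : ℕ) + 1))

/-- `I_h(S,n)`, the set of permutations of `S_n` with h-inversion set `S`. -/
def Ih (h : ℕ → ℕ) (S : Finset (ℕ × ℕ)) (n : ℕ) : Finset (Equiv.Perm (Fin n)) :=
  Finset.univ.filter (fun π => invh h π = S)

/-- `𝓘_h(S;n) = #I_h(S,n)`. -/
def Icount (h : ℕ → ℕ) (S : Finset (ℕ × ℕ)) (n : ℕ) : ℕ := (Ih h S n).card

/-- `S` is h-admissible when it is the h-inversion set of some permutation. -/
def Admissible (h : ℕ → ℕ) (S : Finset (ℕ × ℕ)) : Prop := ∃ n, (Ih h S n).Nonempty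

/-- `j(S)`, the largest index appearing in a pair of `S`. -/
def jS (S : Finset (ℕ × ℕ)) : ℕ := S.sup Prod.snd

/-- `m(S)`, the maximum descent of `S`. -/
def mS (S : Finset (ℕ × ℕ)) : ℕ := (S.filter fun p => p.2 = p.1 + 1).sup Prod.fst

/-- `t(σ) = max{σ_k : 1 ≤ k ≤ j(S), h(k) ≥ j(S)+1}`. -/
def tOf (h : ℕ → ℕ) (S : Finset (ℕ × ℕ)) (σ : Equiv.Perm (Fin (jS S))) : ℕ :=
  ((Finset.Icc 1 (jS S)).filter fun k => jS S + 1 ≤ h k).sup (entry σ)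

/-- `B_k(S,n)`, the permutations in `I_h(S,n)` with entry `k` in position `h(m(S))`. -/
def Bset (h : ℕ → ℕ) (S : Finset (ℕ × ℕ)) (k n : ℕ) : Finset (Equiv.Perm (Fin n)) :=
  (Ih h S n).filter fun π => entry π (h (mS S)) = k

/-- The coefficient `b_k(S) = #B_k(S, h(m(S)))`. -/
def bCoeff (h : ℕ → ℕ) (S : Finset (ℕ × ℕ)) (k : ℕ) : ℕ := (Bset h S k (h (mS S))).card

/-- The coefficient `a_k(S)`. -/
def aCoeff (h : ℕ → ℕ) (S : Finset (ℕ × ℕ)) (k : ℕ) : ℕ :=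
  ((Ih h S (mS S + h (mS S) - 1)).filter fun π =>
    ((Finset.Icc 1 (mS S)).image (entry π)) ∩ Finset.Icc (h (mS S)) (mS S + h (mS S) - 1)
      = Finset.Icc (h (mS S)) (h (mS S) + k - 1)).card

/-- The length (number of inversions) of a permutation. -/
def lenPerm {n : ℕ} (π : Equiv.Perm (Fin n)) : ℕ :=
  ((Finset.univ : Finset (Fin n × Fin n)).filter fun p => p.1 < p.2 ∧ π p.2 < π p.1).card

/-- `ℓ_{[a,b]}(A) = #{(x,y) ∈ [a,b]² : x > y, x ∈ A, y ∉ A}`. -/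
def lenSet (a b : ℕ) (A : Finset ℕ) : ℕ :=
  ((Finset.Icc a b ×ˢ Finset.Icc a b).filter fun q => q.2 < q.1 ∧ q.1 ∈ A ∧ q.2 ∉ A).card

/-- If `π ∈ I_h(S,n)` with `π_{h(m)} = k` (where `h(m)−m ≤ k ≤ h(m)` and `n ≥ h(m)`),
and `σ = π|_{h(m)}` is the flattening of `π`, then
`ℓ(π) = ℓ(σ) + ℓ_{[k+1,n]}([k+1,n] \ {π_{h(m)+1},…,π_n})`. -/

lemma adj_lt (h : ℕ → ℕ) (hgt : ∀ i : ℕ, 0 < i → i < h i) {n : ℕ}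
    (π : Equiv.Perm (Fin n)) (S : Finset (ℕ × ℕ)) (hS : invh h π = S)
    (i : ℕ) (hi : mS S ≤ i) (hi1 : i + 1 < n) :
    π ⟨i, by omega⟩ < π ⟨i + 1, hi1⟩ := by
  by_contra hcon
  have hne : π ⟨i + 1, hi1⟩ ≠ π ⟨i, by omega⟩ := by
    intro he
    have := π.injective he
    simp [Fin.ext_iff] at this
  have hlt : π ⟨i + 1, hi1⟩ < π ⟨i, by omega⟩ := lt_of_le_of_ne (not_lt.mp hcon) hne
  have hmem : (i + 1, i + 2) ∈ S := by
    rw [← hS, invh]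
    refine Finset.mem_image.mpr ⟨(⟨i, by omega⟩, ⟨i + 1, hi1⟩), ?_, rfl⟩
    refine Finset.mem_filter.mpr ⟨Finset.mem_univ _, ?_, ?_, hlt⟩
    · simp
    · exact hgt (i + 1) i.succ_pos
  have h2 : i + 1 ≤ mS S := by
    have : ((i + 1, i + 2) : ℕ × ℕ) ∈ S.filter fun p => p.2 = p.1 + 1 :=
      Finset.mem_filter.mpr ⟨hmem, rfl⟩
    exact Finset.le_sup (f := Prod.fst) this
  omega

lemma chain_lt (h : ℕ → ℕ) (hgt : ∀ i : ℕ, 0 < i → i < h i) {n : ℕ}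
    (π : Equiv.Perm (Fin n)) (S : Finset (ℕ × ℕ)) (hS : invh h π = S) :
    ∀ (d i : ℕ), mS S ≤ i → ∀ (hlt : i + d + 1 < n),
      π ⟨i, by omega⟩ < π ⟨i + d + 1, hlt⟩ := by
  intro d
  induction d with
  | zero => intro i hi hlt; exact adj_lt h hgt π S hS i hi hlt
  | succ e ih =>
      intro i hi hlt
      have h1 : π ⟨i, by omega⟩ < π ⟨i + e + 1, by omega⟩ := ih i hi (by omega)
      have h2 : π ⟨i + e + 1, by omega⟩ < π ⟨i + e + 1 + 1, by omega⟩ :=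
        adj_lt h hgt π S hS (i + e + 1) (by omega) (by omega)
      have he : (⟨i + e + 1 + 1, by omega⟩ : Fin n) = ⟨i + (e + 1) + 1, hlt⟩ := by
        simp [Fin.ext_iff]; omega
      exact lt_trans h1 (he ▸ h2)

lemma mono_after (h : ℕ → ℕ) (hgt : ∀ i : ℕ, 0 < i → i < h i) {n : ℕ}
    (π : Equiv.Perm (Fin n)) (S : Finset (ℕ × ℕ)) (hS : invh h π = S)
    {i j : Fin n} (hi : mS S ≤ (i : ℕ)) (hij : (i : ℕ) < (j : ℕ)) : π i < π j := by
  have key := chain_lt h hgt π S hS ((j : ℕ) - (i : ℕ) - 1) (i : ℕ) hi (by omega)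
  have e1 : (⟨(i : ℕ), by omega⟩ : Fin n) = i := by simp [Fin.ext_iff]
  have e2 : (⟨(i : ℕ) + ((j : ℕ) - (i : ℕ) - 1) + 1, by omega⟩ : Fin n) = j := by
    simp [Fin.ext_iff]; omega
  rwa [e1, e2] at key

set_option maxHeartbeats 2000000 in
theorem stmt15 (h : ℕ → ℕ) (hmono : ∀ ⦃i j : ℕ⦄, 0 < i → i ≤ j → h i ≤ h j)
    (hgt : ∀ i : ℕ, 0 < i → i < h i) (S : Finset (ℕ × ℕ)) (hSne : S.Nonempty)
    (hadm : Admissible h S) (n k : ℕ) (hn : h (mS S) ≤ n)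
    (hk1 : h (mS S) - mS S ≤ k) (hk2 : k ≤ h (mS S))
    (π : Equiv.Perm (Fin n)) (hπ : π ∈ Ih h S n) (hπk : entry π (h (mS S)) = k)
    (σ : Equiv.Perm (Fin (h (mS S))))
    (hσ : ∀ i j : Fin (h (mS S)), σ i < σ j ↔ π (Fin.castLE hn i) < π (Fin.castLE hn j)) :
    lenPerm π =
      lenPerm σ +
        lenSet (k + 1) n
          (Finset.Icc (k + 1) n \ ((Finset.Icc (h (mS S) + 1) n).image (entry π))) := by
  classical
  have hSπ : invh h π = S := (Finset.mem_filter.mp hπ).2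
  -- m ≥ 1
  have hm1 : 1 ≤ mS S := by
    by_contra hcon
    obtain ⟨p, hp⟩ := hSne
    rw [← hSπ, invh, Finset.mem_image] at hp
    obtain ⟨q, hq, rfl⟩ := hp
    have hq' := Finset.mem_filter.mp hq
    have hlt : π q.1 < π q.2 := mono_after h hgt π S hSπ (by omega) hq'.2.1
    exact absurd hq'.2.2.2 (not_lt.mpr (le_of_lt hlt))
  have hmH : mS S < h (mS S) := hgt _ hm1
  have hHn' : h (mS S) - 1 < n := by omega
  unfold entry at hπk
  rw [dif_pos hHn'] at hπk
  -- tail values are at least k+1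
  have tail_ge : ∀ j : Fin n, h (mS S) ≤ (j : ℕ) → k ≤ (π j : ℕ) := by
    intro j hj
    have hlt : π ⟨h (mS S) - 1, hHn'⟩ < π j :=
      mono_after h hgt π S hSπ (by simp; omega) (by simp; omega)
    have hlt' : ((π ⟨h (mS S) - 1, hHn'⟩ : Fin n) : ℕ) < ((π j : Fin n) : ℕ) := hlt
    omega
  -- any h-inverted pair has first index < h(m)
  have first_lt : ∀ p : Fin n × Fin n, π p.2 < π p.1 → (p.1 : ℕ) < (p.2 : ℕ) →
      (p.1 : ℕ) < h (mS S) := by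
    intro p hinv hlt
    by_contra hc
    exact absurd (mono_after h hgt π S hSπ (by omega) hlt) (not_lt.mpr (le_of_lt hinv))
  set T : Finset ℕ := (Finset.Icc (h (mS S) + 1) n).image (entry π) with hTdef
  have hT : ∀ x : ℕ, x ∈ T ↔ ∃ jj : Fin n, h (mS S) ≤ (jj : ℕ) ∧ (π jj : ℕ) + 1 = x := by
    intro x
    constructor
    · intro hx
      rw [hTdef, Finset.mem_image] at hx
      obtain ⟨q, hq, hqx⟩ := hx
      rw [Finset.mem_Icc] at hq
      have hq1 : q - 1 < n := by omega
      refine ⟨⟨q - 1, hq1⟩, by simp; omega, ?_⟩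
      rw [← hqx]; unfold entry; rw [dif_pos hq1]
    · rintro ⟨jj, hjjH, rfl⟩
      rw [hTdef, Finset.mem_image]
      refine ⟨(jj : ℕ) + 1, Finset.mem_Icc.mpr ⟨by omega, by omega⟩, ?_⟩
      have hlt : (jj : ℕ) + 1 - 1 < n := by simp
      have hee : (⟨(jj : ℕ) + 1 - 1, hlt⟩ : Fin n) = jj := Fin.ext (by simp)
      unfold entry; rw [dif_pos hlt, hee]
  set F : Finset (Fin n × Fin n) :=
    (Finset.univ : Finset (Fin n × Fin n)).filter
      (fun p => p.1 < p.2 ∧ π p.2 < π p.1) with hFdef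
  have hsplit : lenPerm π = (F.filter fun p => (p.2 : ℕ) < h (mS S)).card
      + (F.filter fun p => ¬ (p.2 : ℕ) < h (mS S)).card := by
    rw [Finset.card_filter_add_card_filter_not]
    rfl
  have hpart1 : (F.filter fun p => (p.2 : ℕ) < h (mS S)).card = lenPerm σ := by
    rw [lenPerm]
    refine Finset.card_nbij'
      (fun p => ((⟨min (p.1 : ℕ) (h (mS S) - 1), by omega⟩ : Fin (h (mS S))),
                 (⟨min (p.2 : ℕ) (h (mS S) - 1), by omega⟩ : Fin (h (mS S)))))
      (fun p => ((Fin.castLE hn p.1 : Fin n), (Fin.castLE hn p.2 : Fin n)))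
      ?_ ?_ ?_ ?_
    · intro p hp
      dsimp only
      rw [Finset.mem_coe, Finset.mem_filter] at hp
      obtain ⟨hp0, hp2⟩ := hp
      rw [hFdef, Finset.mem_filter] at hp0
      obtain ⟨-, hlt, hinv⟩ := hp0
      have hlt' : (p.1 : ℕ) < (p.2 : ℕ) := hlt
      have h2H : (p.2 : ℕ) < h (mS S) := hp2
      have h1H : (p.1 : ℕ) < h (mS S) := lt_trans hlt' h2H
      have e1 : (Fin.castLE hn (⟨min (p.1 : ℕ) (h (mS S) - 1), by omega⟩ : Fin (h (mS S)))) = p.1 :=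
        Fin.ext (by simp; omega)
      have e2 : (Fin.castLE hn (⟨min (p.2 : ℕ) (h (mS S) - 1), by omega⟩ : Fin (h (mS S)))) = p.2 :=
        Fin.ext (by simp; omega)
      refine Finset.mem_filter.mpr ⟨Finset.mem_univ _, ?_, ?_⟩
      · show min (p.1 : ℕ) (h (mS S) - 1) < min (p.2 : ℕ) (h (mS S) - 1)
        omega
      · rw [hσ, e1, e2]; exact hinv
    · intro p hp
      dsimp only
      rw [Finset.mem_coe, Finset.mem_filter] at hp
      obtain ⟨-, hlt, hinv⟩ := hp
      refine Finset.mem_filter.mpr ⟨?_, ?_⟩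
      · rw [hFdef, Finset.mem_filter]
        refine ⟨Finset.mem_univ _, ?_, (hσ p.2 p.1).mp hinv⟩
        show ((Fin.castLE hn p.1 : Fin n) : ℕ) < ((Fin.castLE hn p.2 : Fin n) : ℕ)
        exact hlt
      · show ((Fin.castLE hn p.2 : Fin n) : ℕ) < h (mS S)
        simp
    · intro p hp
      dsimp only
      rw [Finset.mem_coe, Finset.mem_filter] at hp
      obtain ⟨hp0, hp2⟩ := hp
      rw [hFdef, Finset.mem_filter] at hp0
      obtain ⟨-, hlt, -⟩ := hp0
      have hlt' : (p.1 : ℕ) < (p.2 : ℕ) := hlt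
      have h2H : (p.2 : ℕ) < h (mS S) := hp2
      have h1H : (p.1 : ℕ) < h (mS S) := lt_trans hlt' h2H
      exact Prod.ext (Fin.ext (by simp; omega)) (Fin.ext (by simp; omega))
    · intro p hp
      dsimp only
      refine Prod.ext (Fin.ext ?_) (Fin.ext ?_)
      · have := p.1.isLt; simp; omega
      · have := p.2.isLt; simp; omega
  have hpart2 : (F.filter fun p => ¬ (p.2 : ℕ) < h (mS S)).card
      = lenSet (k + 1) n (Finset.Icc (k + 1) n \ T) := by
    rw [lenSet]
    have hn1 : 1 ≤ n := by omega
    refine Finset.card_nbij'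
      (fun p => ((π p.1 : ℕ) + 1, (π p.2 : ℕ) + 1))
      (fun q => (π.symm ⟨min (q.1 - 1) (n - 1), by omega⟩,
                 π.symm ⟨min (q.2 - 1) (n - 1), by omega⟩))
      ?_ ?_ ?_ ?_
    · intro p hp
      dsimp only
      rw [Finset.mem_coe, Finset.mem_filter] at hp
      obtain ⟨hp0, hp2⟩ := hp
      rw [hFdef, Finset.mem_filter] at hp0
      obtain ⟨-, hlt, hinv⟩ := hp0
      have hlt' : (p.1 : ℕ) < (p.2 : ℕ) := hlt
      have h2H : h (mS S) ≤ (p.2 : ℕ) := not_lt.mp hp2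
      have h1H : (p.1 : ℕ) < h (mS S) := first_lt p hinv hlt'
      have hky : k ≤ (π p.2 : ℕ) := tail_ge p.2 h2H
      have hinv' : ((π p.2 : Fin n) : ℕ) < ((π p.1 : Fin n) : ℕ) := hinv
      have hx_n : (π p.1 : ℕ) < n := (π p.1).isLt
      have hy_n : (π p.2 : ℕ) < n := (π p.2).isLt
      refine Finset.mem_filter.mpr ⟨Finset.mem_product.mpr
        ⟨Finset.mem_Icc.mpr ⟨by omega, by omega⟩, Finset.mem_Icc.mpr ⟨by omega, by omega⟩⟩,
        by omega, ?_, ?_⟩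
      · refine Finset.mem_sdiff.mpr ⟨Finset.mem_Icc.mpr ⟨by omega, by omega⟩, ?_⟩
        intro hxT
        obtain ⟨jj, hjjH, hjjv⟩ := (hT _).mp hxT
        have he : π jj = π p.1 := Fin.ext (by omega)
        have : jj = p.1 := π.injective he
        omega
      · intro hyA
        have hyT : ((π p.2 : ℕ) + 1) ∈ T := (hT _).mpr ⟨p.2, h2H, rfl⟩
        exact (Finset.mem_sdiff.mp hyA).2 hyT
    · intro q hq
      dsimp only
      rw [Finset.mem_coe, Finset.mem_filter] at hq
      obtain ⟨hqp, hyx, hA1, hA2⟩ := hq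
      rw [Finset.mem_product] at hqp
      obtain ⟨hq1, hq2⟩ := hqp
      rw [Finset.mem_Icc] at hq1 hq2
      have hq2T : q.2 ∈ T := by
        by_contra hc
        exact hA2 (Finset.mem_sdiff.mpr ⟨Finset.mem_Icc.mpr hq2, hc⟩)
      obtain ⟨jj, hjjH, hjjv⟩ := (hT _).mp hq2T
      have hq1T : q.1 ∉ T := (Finset.mem_sdiff.mp hA1).2
      have e2 : (⟨min (q.2 - 1) (n - 1), by omega⟩ : Fin n) = π jj := Fin.ext (by
        have h1 := jj.isLt
        have h2 := (π jj).isLt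
        simp; omega)
      have e2' : π.symm ⟨min (q.2 - 1) (n - 1), by omega⟩ = jj := by
        rw [e2]; exact π.symm_apply_apply jj
      set a : Fin n := π.symm ⟨min (q.1 - 1) (n - 1), by omega⟩ with hadef
      have ha1 : (π a : ℕ) = q.1 - 1 := by
        rw [hadef, π.apply_symm_apply]
        simp; omega
      have haH : (a : ℕ) < h (mS S) := by
        by_contra hc
        exact hq1T ((hT _).mpr ⟨a, by omega, by omega⟩)
      refine Finset.mem_filter.mpr ⟨?_, ?_⟩
      · rw [hFdef, Finset.mem_filter]
        refine ⟨Finset.mem_univ _, ?_, ?_⟩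
        · show (a : Fin n) < π.symm ⟨min (q.2 - 1) (n - 1), by omega⟩
          rw [e2']
          show (a : ℕ) < (jj : ℕ)
          omega
        · show π (π.symm ⟨min (q.2 - 1) (n - 1), by omega⟩) < π a
          rw [e2']
          show ((π jj : Fin n) : ℕ) < ((π a : Fin n) : ℕ)
          omega
      · show ¬ ((π.symm ⟨min (q.2 - 1) (n - 1), by omega⟩ : Fin n) : ℕ) < h (mS S)
        rw [e2']
        omega
    · intro p hp
      dsimp only
      rw [Finset.mem_coe, Finset.mem_filter] at hp
      have e1 : (⟨min ((π p.1 : ℕ) + 1 - 1) (n - 1), by omega⟩ : Fin n) = π p.1 :=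
        Fin.ext (by have := (π p.1).isLt; simp; omega)
      have e2 : (⟨min ((π p.2 : ℕ) + 1 - 1) (n - 1), by omega⟩ : Fin n) = π p.2 :=
        Fin.ext (by have := (π p.2).isLt; simp; omega)
      refine Prod.ext ?_ ?_
      · show π.symm ⟨min ((π p.1 : ℕ) + 1 - 1) (n - 1), by omega⟩ = p.1
        rw [e1]; exact π.symm_apply_apply p.1
      · show π.symm ⟨min ((π p.2 : ℕ) + 1 - 1) (n - 1), by omega⟩ = p.2
        rw [e2]; exact π.symm_apply_apply p.2
    · intro q hq
      dsimp only
      rw [Finset.mem_coe, Finset.mem_filter] at hq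
      obtain ⟨hqp, hyx, hA1, hA2⟩ := hq
      rw [Finset.mem_product] at hqp
      obtain ⟨hq1, hq2⟩ := hqp
      rw [Finset.mem_Icc] at hq1 hq2
      have e1 : ((π (π.symm ⟨min (q.1 - 1) (n - 1), by omega⟩) : Fin n) : ℕ) = q.1 - 1 := by
        rw [π.apply_symm_apply]; simp; omega
      have e2 : ((π (π.symm ⟨min (q.2 - 1) (n - 1), by omega⟩) : Fin n) : ℕ) = q.2 - 1 := by
        rw [π.apply_symm_apply]; simp; omega
      refine Prod.ext ?_ ?_
      · show ((π (π.symm ⟨min (q.1 - 1) (n - 1), by omega⟩) : Fin n) : ℕ) + 1 = q.1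
        omega
      · show ((π (π.symm ⟨min (q.2 - 1) (n - 1), by omega⟩) : Fin n) : ℕ) + 1 = q.2
        omega
  rw [hsplit, hpart1, hpart2]
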